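/- Let L : F_{q^n} → F_{q^n} be F_q-linear with kernel exactly α·F_q for some nonzero α, let α be a b-linear translator of f : F_{q^n} → F_q, let h : F_q → F_q be a bijection, and let γ ∈ F_{q^n}. Then G(x) = L(x) + γ·h(f(x)) is a permutation of F_{q^n} if and only if b ≠ 0 and γ is not in the image of L. -/

import Mathlib

/-- Let `T` be an `F_q`-linear map on `F_{q^n}` with kernel exactly `α·F_q` (`α ≠ 0`),
`α` a `b`-linear translator of `f`, `h` a bijection of `F_q`, `γ ∈ F_{q^n}`. Then
`G(x) = T(x) + γ h(f(x))` is a permutation iff `b ≠ 0` and `γ ∉ im T`. -/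
theorem stmt_19 {K L : Type*} [Field K] [Fintype K] [Field L] [Fintype L] [Algebra K L]
    (T : L →ₗ[K] L) (α : L) (hα0 : α ≠ 0)
    (hker : LinearMap.ker T = Submodule.span K {α})
    (f : L → K) (b : K)
    (hb : ∀ (x : L) (u : K), f (x + u • α) - f x = u * b)
    (h : K → K) (hh : Function.Bijective h)
    (γ : L) :
    Function.Bijective (fun x : L => T x + h (f x) • γ) ↔
      (b ≠ 0 ∧ γ ∉ Set.range T) := by
  have hTα : T α = 0 := by
    have : α ∈ LinearMap.ker T := by
      rw [hker]; exact Submodule.mem_span_singleton_self α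
    simpa using this
  constructor
  · intro hG
    have hbne : b ≠ 0 := by
      intro hb0
      have h1 : f α = f 0 := by
        have := hb 0 1
        rw [hb0] at this
        simp at this
        exact sub_eq_zero.mp (by simpa using this)
      have : α = 0 := hG.injective (by simp [hTα, h1])
      exact hα0 this
    refine ⟨hbne, ?_⟩
    rintro ⟨z, hz⟩
    by_cases hγ : γ = 0
    · subst hγ
      have : α = 0 := hG.injective (by simp [hTα])
      exact hα0 this
    · obtain ⟨t, ht⟩ := hh.2 (h (f 0) - 1)
      set u := (t - f z) * b⁻¹ with hu
      have hft : f (z + u • α) = t := by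
        have := hb z u
        have hub : u * b = t - f z := by
          rw [hu, mul_assoc, inv_mul_cancel₀ hbne, mul_one]
        rw [hub] at this
        linear_combination this
      have hcol : z + u • α = 0 := by
        apply hG.injective
        show T (z + u • α) + h (f (z + u • α)) • γ = T 0 + h (f 0) • γ
        rw [hft, ht, map_add, map_smul, hTα, smul_zero, add_zero, hz, map_zero,
          zero_add, sub_smul, one_smul]
        abel
      have hz0 : z = -(u • α) := by
        rw [eq_neg_iff_add_eq_zero]; exact hcol
      apply hγ
      rw [← hz, hz0]
      simp [hTα]
  · rintro ⟨hbne, hγ⟩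
    rw [Fintype.bijective_iff_injective_and_card]
    refine ⟨?_, rfl⟩
    intro x y hxy
    simp only at hxy
    by_cases hc : h (f x) = h (f y)
    · have hfxy : f x = f y := hh.1 hc
      have hTxy : T x = T y := by
        rw [hc] at hxy
        exact add_right_cancel hxy
      have hmem : x - y ∈ Submodule.span K {α} := by
        rw [← hker]
        simp [LinearMap.mem_ker, map_sub, hTxy]
      obtain ⟨v, hv⟩ := Submodule.mem_span_singleton.mp hmem
      have hx : x = y + v • α := by rw [hv]; abel
      have : f x - f y = v * b := by rw [hx]; exact hb y v
      rw [hfxy, sub_self] at this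
      have hv0 : v = 0 := by
        rcases mul_eq_zero.mp this.symm with h | h
        · exact h
        · exact absurd h hbne
      rw [hv0, zero_smul] at hv
      exact sub_eq_zero.mp hv.symm
    · exfalso
      apply hγ
      have hcne : h (f y) - h (f x) ≠ 0 := sub_ne_zero.mpr (Ne.symm hc)
      refine ⟨(h (f y) - h (f x))⁻¹ • (x - y), ?_⟩
      rw [map_smul, map_sub]
      have hxy' := hxy
      rw [Algebra.smul_def, Algebra.smul_def] at hxy'
      have h1 : T x - T y = (h (f y) - h (f x)) • γ := by
        rw [Algebra.smul_def, map_sub]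
        linear_combination hxy'
      rw [h1, smul_smul, inv_mul_cancel₀ hcne, one_smul]
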